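/- In the group algebra C S_4, let f_i = 1 − s_i for i = 1, 2, 3 (s_i the adjacent transpositions), and g_i = f_i f_{i+1} f_i − f_i for i = 1, 2. Then g_1 g_2 g_1 − 4 g_1 = 8 Σ_σ (−1)^{|σ|} σ, where the sum is over all permutations σ of {1,2,3,4} and |σ| denotes the sign exponent (so (−1)^{|σ|} is the sign of σ). -/

import Mathlib

/-- The element `f_i = 1 − s_i` of the complex group algebra of `S_k`, where
`s_i = (i, i+1)` is an adjacent transposition (here `0`-indexed: for `i + 1 < k`, `s_i`
swaps the `i`-th and `(i+1)`-st letters); `0` for out-of-range `i`. -/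
noncomputable def fgen (k i : ℕ) : MonoidAlgebra ℂ (Equiv.Perm (Fin k)) :=
  if h : i + 1 < k then
    1 - MonoidAlgebra.of ℂ (Equiv.Perm (Fin k))
      (Equiv.swap ⟨i, Nat.lt_of_succ_lt h⟩ ⟨i + 1, h⟩)
  else 0

/-- `g_i = f_i f_{i+1} f_i − f_i` in `ℂ S_k`. -/
noncomputable def ggen (k i : ℕ) : MonoidAlgebra ℂ (Equiv.Perm (Fin k)) :=
  fgen k i * fgen k (i + 1) * fgen k i - fgen k i

/- ### Computable model: functions `Perm (Fin 4) → ℤ` with convolution -/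

abbrev G4 := Equiv.Perm (Fin 4)

def conv (f g : G4 → ℤ) : G4 → ℤ := fun x => ∑ p : G4, f p * g (p⁻¹ * x)

def δ (σ : G4) : G4 → ℤ := fun x => if x = σ then 1 else 0

def fz0 : G4 → ℤ := δ 1 - δ (Equiv.swap 0 1)
def fz1 : G4 → ℤ := δ 1 - δ (Equiv.swap 1 2)
def fz2 : G4 → ℤ := δ 1 - δ (Equiv.swap 2 3)
def gz0 : G4 → ℤ := conv (conv fz0 fz1) fz0 - fz0
def gz1 : G4 → ℤ := conv (conv fz1 fz2) fz1 - fz1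

def t0 : G4 → ℤ := fun σ =>
  if σ 0 = 0 ∧ σ 1 = 1 ∧ σ 2 = 2 then (1:ℤ) else if σ 0 = 0 ∧ σ 1 = 2 ∧ σ 2 = 1 then (-1:ℤ) else if σ 0 = 1 ∧ σ 1 = 0 ∧ σ 2 = 2 then (-1:ℤ) else if σ 0 = 1 ∧ σ 1 = 2 ∧ σ 2 = 0 then (1:ℤ) else if σ 0 = 2 ∧ σ 1 = 0 ∧ σ 2 = 1 then (1:ℤ) else if σ 0 = 2 ∧ σ 1 = 1 ∧ σ 2 = 0 then (-1:ℤ) else 0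

def t1 : G4 → ℤ := fun σ =>
  if σ 0 = 0 ∧ σ 1 = 1 ∧ σ 2 = 2 then (1:ℤ) else if σ 0 = 0 ∧ σ 1 = 1 ∧ σ 2 = 3 then (-1:ℤ) else if σ 0 = 0 ∧ σ 1 = 2 ∧ σ 2 = 1 then (-1:ℤ) else if σ 0 = 0 ∧ σ 1 = 2 ∧ σ 2 = 3 then (1:ℤ) else if σ 0 = 0 ∧ σ 1 = 3 ∧ σ 2 = 1 then (1:ℤ) else if σ 0 = 0 ∧ σ 1 = 3 ∧ σ 2 = 2 then (-1:ℤ) else 0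

def t01 : G4 → ℤ := fun σ =>
  if σ 0 = 0 ∧ σ 1 = 1 ∧ σ 2 = 2 then (2:ℤ) else
  if σ 0 = 0 ∧ σ 1 = 1 ∧ σ 2 = 3 then (-2:ℤ) else
  if σ 0 = 0 ∧ σ 1 = 2 ∧ σ 2 = 1 then (-2:ℤ) else
  if σ 0 = 0 ∧ σ 1 = 2 ∧ σ 2 = 3 then (2:ℤ) else
  if σ 0 = 0 ∧ σ 1 = 3 ∧ σ 2 = 1 then (2:ℤ) else
  if σ 0 = 0 ∧ σ 1 = 3 ∧ σ 2 = 2 then (-2:ℤ) else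
  if σ 0 = 1 ∧ σ 1 = 0 ∧ σ 2 = 2 then (-2:ℤ) else
  if σ 0 = 1 ∧ σ 1 = 0 ∧ σ 2 = 3 then (2:ℤ) else
  if σ 0 = 1 ∧ σ 1 = 2 ∧ σ 2 = 0 then (2:ℤ) else
  if σ 0 = 1 ∧ σ 1 = 2 ∧ σ 2 = 3 then (-2:ℤ) else
  if σ 0 = 1 ∧ σ 1 = 3 ∧ σ 2 = 0 then (-2:ℤ) else
  if σ 0 = 1 ∧ σ 1 = 3 ∧ σ 2 = 2 then (2:ℤ) else
  if σ 0 = 2 ∧ σ 1 = 0 ∧ σ 2 = 1 then (2:ℤ) else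
  if σ 0 = 2 ∧ σ 1 = 0 ∧ σ 2 = 3 then (-2:ℤ) else
  if σ 0 = 2 ∧ σ 1 = 1 ∧ σ 2 = 0 then (-2:ℤ) else
  if σ 0 = 2 ∧ σ 1 = 1 ∧ σ 2 = 3 then (2:ℤ) else
  if σ 0 = 2 ∧ σ 1 = 3 ∧ σ 2 = 0 then (2:ℤ) else
  if σ 0 = 2 ∧ σ 1 = 3 ∧ σ 2 = 1 then (-2:ℤ) else
  0

set_option maxRecDepth 100000
set_option maxHeartbeats 1000000

theorem hgz0 : gz0 = t0 := by decide
theorem hgz1 : gz1 = t1 := by decide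
theorem ht01 : conv t0 t1 = t01 := by decide
theorem hfin : conv t01 t0 - (fun x => 4 * t0 x)
    = fun σ => 8 * (Equiv.Perm.sign σ : ℤ) := by decide

theorem key : conv (conv gz0 gz1) gz0 - (fun x => 4 * gz0 x)
    = fun σ => 8 * (Equiv.Perm.sign σ : ℤ) := by
  rw [hgz0, hgz1, ht01, hfin]

/- ### The transport map φ -/

noncomputable def φ (f : G4 → ℤ) : MonoidAlgebra ℂ G4 :=
  ∑ σ : G4, ((f σ : ℤ) : ℂ) • MonoidAlgebra.of ℂ G4 σ

theorem φ_sub (f g : G4 → ℤ) : φ (f - g) = φ f - φ g := by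
  simp [φ, sub_smul, Finset.sum_sub_distrib]

theorem φ_delta (σ : G4) : φ (δ σ) = MonoidAlgebra.of ℂ G4 σ := by
  simp [φ, δ, apply_ite (fun z : ℤ => (z : ℂ))]

theorem φ_conv (f g : G4 → ℤ) : φ (conv f g) = φ f * φ g := by
  rw [φ, φ, φ, Finset.sum_mul_sum]
  have step : ∀ σ : G4,
      (∑ τ : G4, (((f σ : ℤ) : ℂ) • MonoidAlgebra.of ℂ G4 σ) *
        (((g τ : ℤ) : ℂ) • MonoidAlgebra.of ℂ G4 τ))
      = ∑ x : G4, ((f σ * g (σ⁻¹ * x) : ℤ) : ℂ) • MonoidAlgebra.of ℂ G4 x := by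
    intro σ
    rw [← Equiv.sum_comp (Equiv.mulLeft σ)
      (fun x => ((f σ * g (σ⁻¹ * x) : ℤ) : ℂ) • MonoidAlgebra.of ℂ G4 x)]
    refine Finset.sum_congr rfl fun τ _ => ?_
    simp [smul_mul_smul_comm, Int.cast_mul]
  rw [Finset.sum_congr rfl fun σ _ => step σ, Finset.sum_comm]
  refine Finset.sum_congr rfl fun x _ => ?_
  rw [conv, ← Finset.sum_smul]
  push_cast
  rfl

theorem φ_fz0 : φ fz0 = fgen 4 0 := by
  rw [fz0, φ_sub, φ_delta, φ_delta, fgen, dif_pos (by norm_num)]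
  rfl

theorem φ_fz1 : φ fz1 = fgen 4 1 := by
  rw [fz1, φ_sub, φ_delta, φ_delta, fgen, dif_pos (by norm_num)]
  rfl

theorem φ_fz2 : φ fz2 = fgen 4 2 := by
  rw [fz2, φ_sub, φ_delta, φ_delta, fgen, dif_pos (by norm_num)]
  rfl

theorem φ_gz0 : φ gz0 = ggen 4 0 := by
  rw [gz0, φ_sub, φ_conv, φ_conv, φ_fz0, φ_fz1, ggen]

theorem φ_gz1 : φ gz1 = ggen 4 1 := by
  rw [gz1, φ_sub, φ_conv, φ_conv, φ_fz1, φ_fz2, ggen]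

theorem φ_mul_const (n : ℤ) (f : G4 → ℤ) :
    φ (fun x => n * f x) = (n : ℂ) • φ f := by
  simp [φ, Finset.smul_sum, Int.cast_mul, mul_smul]

/-- In `ℂ S_4`, with `f_i = 1 − s_i` (`i = 1, 2, 3`, here indexed `0, 1, 2`) and
`g_i = f_i f_{i+1} f_i − f_i`, one has
`g_1 g_2 g_1 − 4 g_1 = 8 · Σ_σ (−1)^{|σ|} σ`, the sum over all permutations of
`{1,2,3,4}` weighted by their signs. -/
theorem stmt_18 :
    ggen 4 0 * ggen 4 1 * ggen 4 0 - 4 * ggen 4 0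
      = 8 * ∑ σ : Equiv.Perm (Fin 4),
          ((Equiv.Perm.sign σ : ℤ) : ℂ) • MonoidAlgebra.of ℂ (Equiv.Perm (Fin 4)) σ := by
  have h4 : (4 : MonoidAlgebra ℂ G4) = MonoidAlgebra.single (1 : G4) (4 : ℂ) := by
    simpa using MonoidAlgebra.natCast_def (R := ℂ) (M := G4) 4
  have h8 : (8 : MonoidAlgebra ℂ G4) = MonoidAlgebra.single (1 : G4) (8 : ℂ) := by
    simpa using MonoidAlgebra.natCast_def (R := ℂ) (M := G4) 8
  have lhs_eq : ggen 4 0 * ggen 4 1 * ggen 4 0 - 4 * ggen 4 0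
      = φ (conv (conv gz0 gz1) gz0 - (fun x => 4 * gz0 x)) := by
    rw [φ_sub, φ_conv, φ_conv, φ_mul_const, φ_gz0, φ_gz1]
    congr 1
    rw [Algebra.smul_def]
    norm_num
    rw [h4]
  have rhs_eq : φ (fun σ => 8 * (Equiv.Perm.sign σ : ℤ))
      = 8 * ∑ σ : Equiv.Perm (Fin 4),
          ((Equiv.Perm.sign σ : ℤ) : ℂ) • MonoidAlgebra.of ℂ (Equiv.Perm (Fin 4)) σ := by
    rw [show (fun σ : G4 => 8 * (Equiv.Perm.sign σ : ℤ))
        = (fun x => 8 * (fun σ : G4 => (Equiv.Perm.sign σ : ℤ)) x) from rfl,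
      φ_mul_const, Algebra.smul_def]
    norm_num
    rw [← h8]
    congr 1
    unfold φ
    simp [MonoidAlgebra.of_apply, MonoidAlgebra.smul_single']
  rw [lhs_eq, key, rhs_eq]
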